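/- Let q with |q| < 1 and complex a, x with |x| < 1. Then ∑_{k=0}^{∞} (a; q)_k x^k = ∑_{k=0}^{∞} q^{k(k-1)/2} (−a x)^k / (x; q)_{k+1}, provided x ≠ q^{-m} for all m ≤ 0 so that the denominators are nonzero. -/

import Mathlib

open Finset Complex

/-- finite q-Pochhammer symbol `(x; q)_n` -/
noncomputable def qp (q x : ℂ) (n : ℕ) : ℂ := ∏ j ∈ Finset.range n, (1 - x * q ^ j)

/-- infinite q-Pochhammer symbol `(x; q)_∞` -/
noncomputable def qpi (q x : ℂ) : ℂ := ∏' j : ℕ, (1 - x * q ^ j)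

open Filter Topology

private lemma tri (k : ℕ) : (k+1)*k/2 = k*(k-1)/2 + k := by
  have h1 : (k+1)*k/2 = (k+1).choose 2 := by
    rw [Nat.choose_two_right]; simp
  have h2 : k*(k-1)/2 = k.choose 2 := (Nat.choose_two_right k).symm
  rw [h1, h2, Nat.choose_succ_succ, Nat.choose_one_right, Nat.add_comm]

private lemma qp_succ (q a : ℂ) (k : ℕ) : qp q a (k+1) = qp q a k * (1 - a * q ^ k) :=
  Finset.prod_range_succ _ _

private lemma qp_succ' (q y : ℂ) (k : ℕ) : qp q y (k+1) = (1 - y) * qp q (q*y) k := by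
  unfold qp
  rw [Finset.prod_range_succ']
  simp only [pow_zero, mul_one]
  rw [mul_comm _ (1-y)]
  congr 1
  exact Finset.prod_congr rfl (fun j _ => by ring)

private lemma qp_norm_le {q : ℂ} (a : ℂ) (hq : ‖q‖ < 1) (k : ℕ) :
    ‖qp q a k‖ ≤ Real.exp (‖a‖ * (1-‖q‖)⁻¹) := by
  have hq0 : (0:ℝ) ≤ ‖q‖ := norm_nonneg q
  calc ‖qp q a k‖ = ∏ j ∈ Finset.range k, ‖1 - a*q^j‖ := by rw [qp, norm_prod]
    _ ≤ ∏ j ∈ Finset.range k, Real.exp (‖a‖ * ‖q‖^j) := by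
        apply Finset.prod_le_prod (fun j _ => norm_nonneg _)
        intro j _
        calc ‖1 - a*q^j‖ ≤ ‖(1:ℂ)‖ + ‖a*q^j‖ := norm_sub_le _ _
          _ = 1 + ‖a‖*‖q‖^j := by rw [norm_one, norm_mul, norm_pow]
          _ ≤ Real.exp (‖a‖*‖q‖^j) := by
              have := Real.add_one_le_exp (‖a‖*‖q‖^j); linarith
    _ = Real.exp (∑ j ∈ Finset.range k, ‖a‖*‖q‖^j) := (Real.exp_sum _ _).symm
    _ ≤ Real.exp (‖a‖ * (1-‖q‖)⁻¹) := by
        apply Real.exp_le_exp.mpr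
        rw [← Finset.mul_sum]
        apply mul_le_mul_of_nonneg_left _ (norm_nonneg a)
        calc ∑ j ∈ Finset.range k, ‖q‖^j ≤ ∑' j : ℕ, ‖q‖^j :=
              Summable.sum_le_tsum _ (fun j _ => pow_nonneg hq0 j)
                (summable_geometric_of_lt_one hq0 hq)
          _ = (1-‖q‖)⁻¹ := tsum_geometric_of_lt_one hq0 hq

private lemma exists_delta {q x : ℂ} (hq : ‖q‖ < 1) (hxp : ∀ m : ℕ, x * q ^ m ≠ 1) :
    ∃ δ : ℝ, 0 < δ ∧ ∀ m : ℕ, δ ≤ ‖1 - x * q ^ m‖ := by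
  have hpos : ∀ m : ℕ, 0 < ‖1 - x*q^m‖ := fun m =>
    norm_pos_iff.mpr (sub_ne_zero.mpr (Ne.symm (hxp m)))
  have h0 : Tendsto (fun m : ℕ => x*q^m) atTop (𝓝 0) := by
    simpa using (tendsto_pow_atTop_nhds_zero_of_norm_lt_one hq).const_mul x
  have h1 : Tendsto (fun m : ℕ => ‖1 - x*q^m‖) atTop (𝓝 1) := by
    have : Tendsto (fun m : ℕ => (1:ℂ) - x*q^m) atTop (𝓝 (1-0)) :=
      tendsto_const_nhds.sub h0
    simpa using this.norm
  obtain ⟨N, hN⟩ := eventually_atTop.mp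
    (h1.eventually (lt_mem_nhds (show (1:ℝ)/2 < 1 by norm_num)))
  set F : Finset ℝ := insert (1/2) ((Finset.range N).image (fun m => ‖1 - x*q^m‖)) with hF
  have hne : F.Nonempty := Finset.insert_nonempty _ _
  have hall : ∀ r ∈ F, 0 < r := by
    intro r hr
    rw [hF] at hr
    rcases Finset.mem_insert.mp hr with h | h
    · rw [h]; norm_num
    · obtain ⟨m, _, hm⟩ := Finset.mem_image.mp h
      rw [← hm]; exact hpos m
  refine ⟨F.min' hne, hall _ (F.min'_mem hne), ?_⟩
  intro m
  by_cases hm : m < N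
  · apply Finset.min'_le
    rw [hF]
    exact Finset.mem_insert.mpr (Or.inr (Finset.mem_image.mpr
      ⟨m, Finset.mem_range.mpr hm, rfl⟩))
  · calc F.min' hne ≤ 1/2 := Finset.min'_le _ _ (by rw [hF]; exact Finset.mem_insert_self _ _)
      _ ≤ ‖1 - x*q^m‖ := le_of_lt (hN m (le_of_not_gt hm))

private lemma qp_lower {q x : ℂ} {δ : ℝ} (hδ0 : 0 ≤ δ) (hδ : ∀ m : ℕ, δ ≤ ‖1 - x*q^m‖)
    (n k : ℕ) : δ ^ k ≤ ‖qp q (x*q^n) k‖ := by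
  calc δ^k = ∏ _j ∈ Finset.range k, δ := by rw [Finset.prod_const, Finset.card_range]
    _ ≤ ∏ j ∈ Finset.range k, ‖1 - (x*q^n)*q^j‖ := by
        apply Finset.prod_le_prod (fun _ _ => hδ0)
        intro j _
        calc δ ≤ ‖1 - x*q^(n+j)‖ := hδ (n+j)
          _ = ‖1 - (x*q^n)*q^j‖ := by congr 1; rw [pow_add]; ring
    _ = ‖qp q (x*q^n) k‖ := by rw [qp, norm_prod]

private lemma qp_ne_zero {q x : ℂ} {δ : ℝ} (hδ0 : 0 < δ) (hδ : ∀ m : ℕ, δ ≤ ‖1 - x*q^m‖)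
    (n k : ℕ) : qp q (x*q^n) k ≠ 0 := by
  have h1 := qp_lower (le_of_lt hδ0) hδ n k
  have h2 : 0 < ‖qp q (x*q^n) k‖ := lt_of_lt_of_le (pow_pos hδ0 k) h1
  exact norm_pos_iff.mp h2

private lemma summable_aux {r c : ℝ} (hr0 : 0 ≤ r) (hr : r < 1) (hc : 0 ≤ c) :
    Summable (fun k : ℕ => r ^ (k*(k-1)/2) * c ^ k) := by
  rcases eq_or_lt_of_le hc with hc0 | hc0
  · apply summable_of_ne_finset_zero (s := {0})
    intro k hk
    simp only [Finset.mem_singleton] at hk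
    rw [← hc0, zero_pow hk, mul_zero]
  rcases eq_or_lt_of_le hr0 with hr0' | hr0'
  · apply summable_of_ne_finset_zero (s := {0,1})
    intro k hk
    simp only [Finset.mem_insert, Finset.mem_singleton] at hk
    push_neg at hk
    have h2 : 2 ≤ k := by omega
    have h3 : 2*1 ≤ k*(k-1) := Nat.mul_le_mul h2 (by omega)
    have h4 : k*(k-1)/2 ≠ 0 :=
      Nat.one_le_iff_ne_zero.mp ((Nat.le_div_iff_mul_le (by norm_num)).mpr (by simpa using h3))
    rw [← hr0', zero_pow h4, zero_mul]
  · have hpos : ∀ k : ℕ, 0 < r ^ (k*(k-1)/2) * c ^ k :=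
      fun k => mul_pos (pow_pos hr0' _) (pow_pos hc0 _)
    apply summable_of_ratio_test_tendsto_lt_one (l := 0) zero_lt_one
      (Eventually.of_forall fun k => ne_of_gt (hpos k))
    have key : ∀ k : ℕ,
        ‖r ^ ((k+1)*((k+1)-1)/2) * c ^ (k+1)‖ / ‖r ^ (k*(k-1)/2) * c ^ k‖ = c * r ^ k := by
      intro k
      have e1 : (k+1)*((k+1)-1)/2 = k*(k-1)/2 + k := by simpa using tri k
      have h1 : r ^ (k*(k-1)/2) ≠ 0 := ne_of_gt (pow_pos hr0' _)
      have h2 : c ^ k ≠ 0 := ne_of_gt (pow_pos hc0 _)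
      rw [e1, pow_add, pow_succ, Real.norm_of_nonneg (by positivity),
        Real.norm_of_nonneg (by positivity)]
      field_simp
    apply Tendsto.congr (fun k => (key k).symm)
    have h5 : Tendsto (fun k : ℕ => c * r^k) atTop (𝓝 (c * 0)) :=
      (tendsto_pow_atTop_nhds_zero_of_lt_one hr0 hr).const_mul c
    simpa using h5

private lemma summable_fs {q : ℂ} (a : ℂ) (hq : ‖q‖ < 1) {y : ℂ} (hy : ‖y‖ < 1) :
    Summable (fun k : ℕ => qp q a k * y ^ k) := by
  apply Summable.of_norm_bounded (g := fun k => Real.exp (‖a‖*(1-‖q‖)⁻¹) * ‖y‖^k)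
    ((summable_geometric_of_lt_one (norm_nonneg y) hy).mul_left _)
  intro k
  rw [norm_mul, norm_pow]
  exact mul_le_mul_of_nonneg_right (qp_norm_le a hq k) (pow_nonneg (norm_nonneg y) k)

private lemma g1_term_bound {q a x : ℂ} {δ : ℝ} (hδ0 : 0 < δ)
    (hδ : ∀ m : ℕ, δ ≤ ‖1 - x*q^m‖) (hq : ‖q‖ < 1) (n k : ℕ) :
    ‖q ^ (k*(k-1)/2) * (-a*(x*q^n))^k / qp q (x*q^n) (k+1)‖
      ≤ δ⁻¹ * (‖q‖ ^ (k*(k-1)/2) * (‖a*x‖/δ) ^ k) := by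
  have hqn : ‖q‖^n ≤ 1 := pow_le_one₀ (norm_nonneg q) (le_of_lt hq)
  rw [norm_div, norm_mul, norm_pow, norm_pow]
  have hnn : ‖-a*(x*q^n)‖ = ‖a*x‖*‖q‖^n := by
    rw [show -a*(x*q^n) = -((a*x)*q^n) from by ring, norm_neg, norm_mul, norm_pow]
  have hnum : ‖q‖^(k*(k-1)/2) * ‖-a*(x*q^n)‖^k ≤ ‖q‖^(k*(k-1)/2) * ‖a*x‖^k := by
    apply mul_le_mul_of_nonneg_left _ (pow_nonneg (norm_nonneg q) _)
    apply pow_le_pow_left₀ (norm_nonneg _)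
    rw [hnn]
    exact mul_le_of_le_one_right (norm_nonneg _) hqn
  have hden : δ^(k+1) ≤ ‖qp q (x*q^n) (k+1)‖ := qp_lower (le_of_lt hδ0) hδ n (k+1)
  calc ‖q‖^(k*(k-1)/2) * ‖-a*(x*q^n)‖^k / ‖qp q (x*q^n) (k+1)‖
      ≤ (‖q‖^(k*(k-1)/2) * ‖a*x‖^k) / δ^(k+1) :=
        div_le_div₀ (by positivity) hnum (pow_pos hδ0 _) hden
    _ = δ⁻¹ * (‖q‖^(k*(k-1)/2) * (‖a*x‖/δ)^k) := by
        rw [div_pow, pow_succ, mul_div_assoc', ← div_eq_inv_mul, div_div]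

private lemma summable_g1 {q x : ℂ} (a : ℂ) {δ : ℝ} (hδ0 : 0 < δ)
    (hδ : ∀ m : ℕ, δ ≤ ‖1 - x*q^m‖) (hq : ‖q‖ < 1) (n : ℕ) :
    Summable (fun k : ℕ => q ^ (k*(k-1)/2) * (-a*(x*q^n))^k / qp q (x*q^n) (k+1)) := by
  apply Summable.of_norm_bounded
    (g := fun k => δ⁻¹ * (‖q‖ ^ (k*(k-1)/2) * (‖a*x‖/δ) ^ k))
    ((summable_aux (norm_nonneg q) hq
      (div_nonneg (norm_nonneg _) (le_of_lt hδ0))).mul_left _)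
  exact fun k => g1_term_bound hδ0 hδ hq n k

private lemma summable_g2 {q x : ℂ} (a : ℂ) {δ : ℝ} (hδ0 : 0 < δ)
    (hδ : ∀ m : ℕ, δ ≤ ‖1 - x*q^m‖) (hq : ‖q‖ < 1) (n : ℕ) :
    Summable (fun k : ℕ => q ^ (k*(k-1)/2) * (-a*(x*q^n))^k / qp q (x*q^(n+1)) k) := by
  have hqn : ‖q‖^n ≤ 1 := pow_le_one₀ (norm_nonneg q) (le_of_lt hq)
  apply Summable.of_norm_bounded
    (g := fun k => ‖q‖ ^ (k*(k-1)/2) * (‖a*x‖/δ) ^ k)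
    (summable_aux (norm_nonneg q) hq (div_nonneg (norm_nonneg _) (le_of_lt hδ0)))
  intro k
  rw [norm_div, norm_mul, norm_pow, norm_pow]
  have hnn : ‖-a*(x*q^n)‖ = ‖a*x‖*‖q‖^n := by
    rw [show -a*(x*q^n) = -((a*x)*q^n) from by ring, norm_neg, norm_mul, norm_pow]
  have hnum : ‖q‖^(k*(k-1)/2) * ‖-a*(x*q^n)‖^k ≤ ‖q‖^(k*(k-1)/2) * ‖a*x‖^k := by
    apply mul_le_mul_of_nonneg_left _ (pow_nonneg (norm_nonneg q) _)
    apply pow_le_pow_left₀ (norm_nonneg _)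
    rw [hnn]
    exact mul_le_of_le_one_right (norm_nonneg _) hqn
  have hden : δ^k ≤ ‖qp q (x*q^(n+1)) k‖ := qp_lower (le_of_lt hδ0) hδ (n+1) k
  calc ‖q‖^(k*(k-1)/2) * ‖-a*(x*q^n)‖^k / ‖qp q (x*q^(n+1)) k‖
      ≤ (‖q‖^(k*(k-1)/2) * ‖a*x‖^k) / δ^k :=
        div_le_div₀ (by positivity) hnum (pow_pos hδ0 _) hden
    _ = ‖q‖^(k*(k-1)/2) * (‖a*x‖/δ)^k := by
        rw [div_pow]
        ring

private lemma feq_f {q : ℂ} (a : ℂ) (hq : ‖q‖ < 1) {y : ℂ} (hy : ‖y‖ < 1) :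
    (1 - y) * (∑' k : ℕ, qp q a k * y ^ k)
      = 1 - a * y * ∑' k : ℕ, qp q a k * (q*y) ^ k := by
  have hqy : ‖q*y‖ < 1 := by
    rw [norm_mul]
    calc ‖q‖*‖y‖ ≤ 1*‖y‖ := mul_le_mul_of_nonneg_right (le_of_lt hq) (norm_nonneg y)
      _ = ‖y‖ := one_mul _
      _ < 1 := hy
  have S1 := summable_fs (q := q) a hq hy
  have S2 := summable_fs (q := q) a hq hqy
  have expand : (∑' k : ℕ, qp q a k * y ^ k)
      = 1 + ∑' k : ℕ, qp q a (k+1) * y ^ (k+1) := by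
    rw [Summable.tsum_eq_zero_add S1]
    simp [qp]
  have expand2 : (∑' k : ℕ, qp q a (k+1) * y ^ (k+1))
      = y * (∑' k : ℕ, qp q a k * y ^ k) - a*y * (∑' k : ℕ, qp q a k * (q*y)^k) := by
    rw [← tsum_mul_left, ← tsum_mul_left, ← Summable.tsum_sub (S1.mul_left y) (S2.mul_left (a*y))]
    apply tsum_congr
    intro k
    rw [qp_succ]
    ring
  linear_combination expand + expand2

private lemma feq_g {q a x : ℂ} {δ : ℝ} (hδ0 : 0 < δ)
    (hδ : ∀ m : ℕ, δ ≤ ‖1 - x*q^m‖) (hq : ‖q‖ < 1) (n : ℕ) :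
    (1 - x*q^n) * (∑' k : ℕ, q ^ (k*(k-1)/2) * (-a*(x*q^n))^k / qp q (x*q^n) (k+1))
      = 1 - a*(x*q^n) *
          ∑' k : ℕ, q ^ (k*(k-1)/2) * (-a*(x*q^(n+1)))^k / qp q (x*q^(n+1)) (k+1) := by
  have hy1 : (1 : ℂ) - x*q^n ≠ 0 := by
    intro h
    have := hδ n
    rw [h, norm_zero] at this
    linarith
  have Su := summable_g2 (x := x) a hδ0 hδ hq n
  have stepA : (1 - x*q^n) *
      (∑' k : ℕ, q ^ (k*(k-1)/2) * (-a*(x*q^n))^k / qp q (x*q^n) (k+1))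
      = ∑' k : ℕ, q ^ (k*(k-1)/2) * (-a*(x*q^n))^k / qp q (x*q^(n+1)) k := by
    rw [← tsum_mul_left]
    apply tsum_congr
    intro k
    have hB : qp q (x*q^(n+1)) k ≠ 0 := qp_ne_zero hδ0 hδ (n+1) k
    rw [qp_succ', show q*(x*q^n) = x*q^(n+1) from by ring]
    field_simp
  have Su' := summable_g1 (x := x) a hδ0 hδ hq (n+1)
  have stepB : (∑' k : ℕ, q ^ (k*(k-1)/2) * (-a*(x*q^n))^k / qp q (x*q^(n+1)) k)
      = 1 - a*(x*q^n) *
          ∑' k : ℕ, q ^ (k*(k-1)/2) * (-a*(x*q^(n+1)))^k / qp q (x*q^(n+1)) (k+1) := by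
    rw [Summable.tsum_eq_zero_add Su]
    have h0 : q ^ (0*(0-1)/2) * (-a*(x*q^n))^0 / qp q (x*q^(n+1)) 0 = 1 := by simp [qp]
    rw [h0]
    have hterm : ∀ k : ℕ,
        q ^ ((k+1)*((k+1)-1)/2) * (-a*(x*q^n))^(k+1) / qp q (x*q^(n+1)) (k+1)
          = -(a*(x*q^n) *
              (q ^ (k*(k-1)/2) * (-a*(x*q^(n+1)))^k / qp q (x*q^(n+1)) (k+1))) := by
      intro k
      have hB : qp q (x*q^(n+1)) (k+1) ≠ 0 := qp_ne_zero hδ0 hδ (n+1) (k+1)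
      have e1 : (k+1)*((k+1)-1)/2 = k*(k-1)/2 + k := by simpa using tri k
      rw [e1, pow_add]
      rw [show (-a*(x*q^(n+1)))^k = (-a*(x*q^n))^k * q^k from by
        rw [show -a*(x*q^(n+1)) = (-a*(x*q^n)) * q from by ring, mul_pow]]
      field_simp
      ring
    rw [tsum_congr hterm, tsum_neg, tsum_mul_left]
    ring
  exact stepA.trans stepB

private noncomputable def FF (q a x : ℂ) (n : ℕ) : ℂ :=
  ∑' k : ℕ, qp q a k * (x*q^n) ^ k

private noncomputable def GG (q a x : ℂ) (n : ℕ) : ℂ :=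
  ∑' k : ℕ, q ^ (k*(k-1)/2) * (-a*(x*q^n))^k / qp q (x*q^n) (k+1)

theorem stmt_7 (q a x : ℂ) (hq : ‖q‖ < 1) (hx : ‖x‖ < 1)
    (hxp : ∀ m : ℕ, x * q ^ m ≠ 1) :
    ∑' k : ℕ, qp q a k * x ^ k =
      ∑' k : ℕ, q ^ (k * (k - 1) / 2) * (-a * x) ^ k / qp q x (k + 1) := by
  have hq' : ‖q‖ < 1 := hq
  have hx' : ‖x‖ < 1 := hx
  obtain ⟨δ, hδ0, hδ⟩ := exists_delta hq' hxp
  have hxn : ∀ n : ℕ, ‖x*q^n‖ ≤ ‖x‖ := fun n => by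
    rw [norm_mul, norm_pow]
    exact mul_le_of_le_one_right (norm_nonneg x) (pow_le_one₀ (norm_nonneg q) hq'.le)
  have hxn' : ∀ n : ℕ, ‖x*q^n‖ < 1 := fun n => lt_of_le_of_lt (hxn n) hx'
  have hne : ∀ n : ℕ, (1 : ℂ) - x*q^n ≠ 0 := fun n => by
    intro h
    have := hδ n
    rw [h, norm_zero] at this
    linarith
  have hrec : ∀ n : ℕ, FF q a x n - GG q a x n
      = (-a*(x*q^n)/(1-x*q^n)) * (FF q a x (n+1) - GG q a x (n+1)) := by
    intro n
    have h1 := feq_f (q := q) a hq' (hxn' n)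
    rw [show q*(x*q^n) = x*q^(n+1) from by ring] at h1
    have h2 := feq_g (q := q) (a := a) hδ0 hδ hq' n
    rw [div_mul_eq_mul_div, eq_div_iff (hne n)]
    simp only [FF, GG]
    linear_combination h1 - h2
  have prod_rec : ∀ n : ℕ, FF q a x 0 - GG q a x 0
      = (∏ j ∈ Finset.range n, (-a*(x*q^j)/(1-x*q^j))) * (FF q a x n - GG q a x n) := by
    intro n
    induction n with
    | zero => simp
    | succ m ih =>
      rw [ih, hrec m, Finset.prod_range_succ]
      ring
  -- uniform bound on FF - GG
  set M : ℝ := Real.exp (‖a‖*(1-‖q‖)⁻¹) with hM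
  have Saux := summable_aux (r := ‖q‖) (c := ‖a*x‖/δ) (norm_nonneg q) hq'
    (div_nonneg (norm_nonneg _) (le_of_lt hδ0))
  set B : ℝ := M * (1-‖x‖)⁻¹ + ∑' k : ℕ, δ⁻¹ * (‖q‖ ^ (k*(k-1)/2) * (‖a*x‖/δ) ^ k)
    with hB
  have Bf : ∀ n : ℕ, ‖FF q a x n‖ ≤ M * (1-‖x‖)⁻¹ := by
    intro n
    apply tsum_of_norm_bounded ((hasSum_geometric_of_lt_one (norm_nonneg x) hx').mul_left M)
    intro k
    rw [norm_mul, norm_pow]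
    exact mul_le_mul (qp_norm_le a hq' k)
      (pow_le_pow_left₀ (norm_nonneg _) (hxn n) k)
      (pow_nonneg (norm_nonneg _) k) (le_of_lt (Real.exp_pos _))
  have Bg : ∀ n : ℕ, ‖GG q a x n‖
      ≤ ∑' k : ℕ, δ⁻¹ * (‖q‖ ^ (k*(k-1)/2) * (‖a*x‖/δ) ^ k) := by
    intro n
    apply tsum_of_norm_bounded (Saux.mul_left δ⁻¹).hasSum
    exact fun k => g1_term_bound hδ0 hδ hq' n k
  have DB : ∀ n : ℕ, ‖FF q a x n - GG q a x n‖ ≤ B := by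
    intro n
    calc ‖FF q a x n - GG q a x n‖ ≤ ‖FF q a x n‖ + ‖GG q a x n‖ := norm_sub_le _ _
      _ ≤ B := add_le_add (Bf n) (Bg n)
  have hB0 : 0 ≤ B := le_trans (norm_nonneg _) (DB 0)
  -- bound on the product
  have Pb : ∀ n : ℕ, ‖∏ j ∈ Finset.range n, (-a*(x*q^j)/(1-x*q^j))‖
      ≤ ‖q‖ ^ (n*(n-1)/2) * (‖a*x‖/δ) ^ n := by
    intro n
    rw [norm_prod]
    calc ∏ j ∈ Finset.range n, ‖-a*(x*q^j)/(1-x*q^j)‖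
        ≤ ∏ j ∈ Finset.range n, (‖a*x‖/δ * ‖q‖^j) := by
          apply Finset.prod_le_prod (fun _ _ => norm_nonneg _)
          intro j _
          rw [norm_div, show -a*(x*q^j) = -((a*x)*q^j) from by ring, norm_neg,
            norm_mul, norm_pow]
          calc ‖a*x‖*‖q‖^j / ‖1-x*q^j‖ ≤ ‖a*x‖*‖q‖^j / δ :=
                div_le_div_of_nonneg_left (by positivity) hδ0 (hδ j)
            _ = ‖a*x‖/δ * ‖q‖^j := by ring
      _ = ‖q‖ ^ (n*(n-1)/2) * (‖a*x‖/δ) ^ n := by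
          rw [Finset.prod_mul_distrib, Finset.prod_const, Finset.card_range,
            Finset.prod_pow_eq_pow_sum, Finset.sum_range_id, mul_comm]
  have hbound : ∀ n : ℕ, ‖FF q a x 0 - GG q a x 0‖
      ≤ (‖q‖ ^ (n*(n-1)/2) * (‖a*x‖/δ) ^ n) * B := by
    intro n
    rw [prod_rec n, norm_mul]
    exact mul_le_mul (Pb n) (DB n) (norm_nonneg _) (by positivity)
  have hlim : Tendsto (fun n : ℕ => (‖q‖ ^ (n*(n-1)/2) * (‖a*x‖/δ) ^ n) * B)
      atTop (𝓝 0) := by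
    have h := Saux.tendsto_atTop_zero
    simpa using h.mul_const B
  have hle0 : ‖FF q a x 0 - GG q a x 0‖ ≤ 0 := ge_of_tendsto' hlim hbound
  have h00 : FF q a x 0 - GG q a x 0 = 0 := norm_le_zero_iff.mp hle0
  have hF0 : FF q a x 0 = ∑' k : ℕ, qp q a k * x ^ k := by
    simp [FF]
  have hG0 : GG q a x 0 = ∑' k : ℕ, q ^ (k * (k - 1) / 2) * (-a * x) ^ k / qp q x (k + 1) := by
    simp [GG]
  rw [← hF0, ← hG0]
  exact sub_eq_zero.mp h00
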